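/- The number of positive 3-braids of length k equals F_{k+3} - 1, where F denotes the Fibonacci sequence with F_0 = 0, F_1 = 1. -/

import Mathlib

open PowerSeries

lemma fibSeries_key :
    ((1 - X) * (1 - X - X ^ 2)) *
      (PowerSeries.mk fun k => (Nat.fib (k + 3) : ℚ) - 1) = 1 := by
  set A : PowerSeries ℚ := PowerSeries.mk fun k => (Nat.fib (k + 3) : ℚ) - 1 with hA
  have h1 : ((1 - X) * (1 - X - X ^ 2)) * A = A - (C (2 : ℚ)) * (X * A) + X ^ 3 * A := by
    rw [C_eq_algebraMap, map_ofNat]; ring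
  rw [h1]
  ext n
  rw [map_add, map_sub, coeff_C_mul]
  match n with
  | 0 =>
    simp [hA, coeff_mk]
    norm_num [Nat.fib]
  | 1 =>
    rw [coeff_succ_X_mul]
    have : ¬ (3 ≤ 1) := by norm_num
    simp [hA, coeff_mk, coeff_X_pow_mul', this, Nat.fib]
    norm_num
  | 2 =>
    rw [coeff_succ_X_mul]
    have : ¬ (3 ≤ 2) := by norm_num
    simp [hA, coeff_mk, coeff_X_pow_mul', this]
    norm_num [Nat.fib]
  | (m + 3) =>
    rw [show m + 3 = (m + 2) + 1 from rfl, coeff_succ_X_mul,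
      show (m + 2) + 1 = m + 3 from rfl, coeff_X_pow_mul]
    simp only [hA, coeff_mk, coeff_one]
    have : Nat.fib (m + 3 + 3) = 2 * Nat.fib (m + 2 + 3) - Nat.fib (m + 3) := by
      simp [Nat.fib_add_two]; omega
    have h6 : (Nat.fib (m + 3 + 3) : ℚ) = 2 * Nat.fib (m + 2 + 3) - Nat.fib (m + 3) := by
      have hle : Nat.fib (m + 3) ≤ 2 * Nat.fib (m + 2 + 3) := by
        have := Nat.fib_mono (show m + 3 ≤ m + 2 + 3 by omega)
        omega
      rw [this]; push_cast [hle]; ring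
    rw [h6]
    simp [Nat.add_eq_zero]
    ring

/-- The number of positive 3-braids of length `k` (the coefficient `b_k` of `t^k` in the
generating function `1/((1-t)(1-t-t²))` of positive 3-braids) equals `F_{k+3} - 1`. -/
theorem positive_three_braids_count (B : PowerSeries ℚ)
    (hB : ((1 - X) * (1 - X - X ^ 2)) * B = 1) :
    ∀ k : ℕ, coeff k B = (Nat.fib (k + 3) : ℚ) - 1 := by
  have hne : ((1 - X) * (1 - X - X ^ 2) : PowerSeries ℚ) ≠ 0 := by
    intro h
    rw [h, zero_mul] at hB
    exact one_ne_zero hB.symm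
  have hBeq : B = PowerSeries.mk fun k => (Nat.fib (k + 3) : ℚ) - 1 :=
    mul_left_cancel₀ hne (hB.trans fibSeries_key.symm)
  intro k
  rw [hBeq, coeff_mk]
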